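/- Let (X,f) be a dynamical system, where X is a compact metric space and f : X → X is continuous. Then E(X,f)* = E(X,f) \ {fⁿ : n ∈ ℕ} is a finite set if and only if there exists a natural number M such that for every x ∈ X the ω-limit set ω_f(x) is finite and has cardinality at most M. -/

import Mathlib

open Filter Set Topology

set_option linter.unusedSectionVars false
set_option linter.unusedVariables false
set_option maxHeartbeats 1000000

section ellisAux
variable {X : Type*} [MetricSpace X] [CompactSpace X] {f : X → X}

local notation "ω[" x "]" => omegaLimit Filter.atTop (fun n : ℕ => f^[n]) ({x} : Set X)

lemma mem_omega_iff' {x y : X} :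
    y ∈ ω[x] ↔ ∀ ε > (0:ℝ), ∃ᶠ n in atTop, dist (f^[n] x) y < ε := by
  rw [mem_omegaLimit_singleton_iff_map_cluster_point, mapClusterPt_iff_frequently]
  constructor
  · intro h ε hε
    exact (h (Metric.ball y ε) (Metric.ball_mem_nhds _ hε)).mono fun n hn => by
      simpa [Metric.mem_ball] using hn
  · intro h s hs
    obtain ⟨ε, hε, hsub⟩ := Metric.mem_nhds_iff.mp hs
    exact (h ε hε).mono fun n hn => hsub (Metric.mem_ball.mpr hn)

lemma mem_omega_of_tendsto {x y : X} {e : ℕ → ℕ} (he : Tendsto e atTop atTop)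
    (h : Tendsto (fun k => f^[e k] x) atTop (𝓝 y)) : y ∈ ω[x] := by
  rw [mem_omega_iff']
  intro ε hε
  rw [frequently_atTop]
  intro N
  have h1 : ∀ᶠ k in atTop, dist (f^[e k] x) y < ε :=
    (Metric.tendsto_nhds.mp h) ε hε
  have h2 : ∀ᶠ k in atTop, N ≤ e k := he.eventually_ge_atTop N
  obtain ⟨k, hk1, hk2⟩ := (h1.and h2).exists
  exact ⟨e k, hk2, hk1⟩

lemma exists_subseq_of_mem_omega {x y : X} (h : y ∈ ω[x]) :
    ∃ φ : ℕ → ℕ, StrictMono φ ∧ Tendsto (fun k => f^[φ k] x) atTop (𝓝 y) := by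
  rw [mem_omega_iff'] at h
  have h' : ∀ m : ℕ, ∃ᶠ n in atTop, dist (f^[n] x) y < 1 / (m + 1) :=
    fun m => h _ (by positivity)
  obtain ⟨φ, hmono, hφ⟩ := extraction_forall_of_frequently h'
  refine ⟨φ, hmono, ?_⟩
  rw [Metric.tendsto_nhds]
  intro ε hε
  obtain ⟨m, hm⟩ := exists_nat_one_div_lt hε
  filter_upwards [eventually_ge_atTop m] with k hk
  calc dist (f^[φ k] x) y < 1 / (k + 1) := hφ k
    _ ≤ 1 / (m + 1) := by
        have hmk : (m:ℝ) + 1 ≤ (k:ℝ) + 1 := by exact_mod_cast Nat.succ_le_succ hk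
        exact one_div_le_one_div_of_le (by positivity) hmk
    _ < ε := hm

lemma omega_mapsTo (hf : Continuous f) {x : X} : MapsTo f (ω[x]) (ω[x]) := by
  intro y hy
  obtain ⟨φ, hmono, hφ⟩ := exists_subseq_of_mem_omega hy
  refine mem_omega_of_tendsto (e := fun k => φ k + 1) ?_ ?_
  · exact tendsto_atTop_mono (fun k => (hmono.id_le k).trans (Nat.le_succ _))
      tendsto_id
  · have : Tendsto (fun k => f (f^[φ k] x)) atTop (𝓝 (f y)) :=
      (hf.tendsto y).comp hφ
    simpa [Function.iterate_succ_apply'] using this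

lemma omega_surjOn (hf : Continuous f) {x : X} : SurjOn f (ω[x]) (ω[x]) := by
  intro y hy
  obtain ⟨φ, hmono, hφ⟩ := exists_subseq_of_mem_omega hy
  -- consider the points f^[φ (k+1) - 1] x
  have hφpos : ∀ k, 1 ≤ φ (k + 1) := fun k =>
    le_trans (Nat.succ_le_succ (Nat.zero_le k)) (hmono.le_apply)
  obtain ⟨z, -, ψ, hψmono, hψ⟩ := isCompact_univ.tendsto_subseq
    (x := fun k => f^[φ (k+1) - 1] x) (fun k => mem_univ _)
  have hz : z ∈ ω[x] := by
    refine mem_omega_of_tendsto (e := fun j => φ (ψ j + 1) - 1) ?_ hψ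
    apply tendsto_atTop_mono (fun j => ?_) tendsto_id
    show id j ≤ φ (ψ j + 1) - 1
    have h1 : ψ j + 1 ≤ φ (ψ j + 1) := hmono.le_apply
    have h2 : j ≤ ψ j := hψmono.le_apply
    simp only [id_eq]
    omega
  refine ⟨z, hz, ?_⟩
  -- f z = y
  have h1 : Tendsto (fun j => f (f^[φ (ψ j + 1) - 1] x)) atTop (𝓝 (f z)) :=
    (hf.tendsto z).comp hψ
  have h2 : ∀ j, f (f^[φ (ψ j + 1) - 1] x) = f^[φ (ψ j + 1)] x := by
    intro j
    conv_rhs => rw [show φ (ψ j + 1) = (φ (ψ j + 1) - 1) + 1 from by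
      have := hφpos (ψ j); omega]
    rw [Function.iterate_succ_apply']
  have h3 : Tendsto (fun j => f^[φ (ψ j + 1)] x) atTop (𝓝 y) := by
    apply hφ.comp
    apply tendsto_atTop_mono (fun j => ?_) tendsto_id
    show id j ≤ ψ j + 1
    have h2 : j ≤ ψ j := hψmono.le_apply
    simp only [id_eq]
    omega
  simp_rw [h2] at h1
  exact tendsto_nhds_unique h1 h3

lemma omega_periodic (hf : Continuous f) {x : X} {M : ℕ}
    (hfin : (ω[x]).Finite) (hcard : (ω[x]).ncard ≤ M) :
    ∀ w ∈ ω[x], f^[Nat.factorial M] w = w := by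
  intro w hw
  have hmaps : MapsTo f (ω[x]) (ω[x]) := omega_mapsTo hf
  have hbij : BijOn f (ω[x]) (ω[x]) :=
    (hfin.surjOn_iff_bijOn_of_mapsTo hmaps).mp (omega_surjOn hf)
  have hinj : InjOn f (ω[x]) := hbij.injOn
  -- iterates map ω[x] into itself and are injective on it
  have hmapsIter : ∀ i : ℕ, MapsTo (f^[i]) (ω[x]) (ω[x]) := by
    intro i
    induction i with
    | zero => intro z hz; simpa using hz
    | succ i ih =>
      intro z hz
      rw [Function.iterate_succ_apply']
      exact hmaps (ih hz)
  have hinjIter : ∀ i : ℕ, InjOn (f^[i]) (ω[x]) := by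
    intro i
    induction i with
    | zero => intro a _ b _ h; simpa using h
    | succ i ih =>
      intro a ha b hb hab
      rw [Function.iterate_succ_apply', Function.iterate_succ_apply'] at hab
      exact ih ha hb (hinj (hmapsIter i ha) (hmapsIter i hb) hab)
  -- pigeonhole: among w, f w, ..., f^[M] w there is a repetition
  have hpigeon : ∃ a b : ℕ, a < b ∧ b ≤ M ∧ f^[a] w = f^[b] w := by
    have hcard' : hfin.toFinset.card < (Finset.univ : Finset (Fin (M+1))).card := by
      rw [Finset.card_univ, Fintype.card_fin, ← Set.ncard_eq_toFinset_card _ hfin]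
      omega
    have hmapsfin : ∀ i : Fin (M+1), f^[i.1] w ∈ hfin.toFinset := by
      intro i
      rw [Set.Finite.mem_toFinset]
      exact hmapsIter i.1 hw
    obtain ⟨i, -, j, -, hij, heq⟩ :=
      Finset.exists_ne_map_eq_of_card_lt_of_maps_to hcard'
        (f := fun i : Fin (M+1) => f^[i.1] w) (fun i _ => hmapsfin i)
    have hij' : i.1 ≠ j.1 := fun h => hij (Fin.ext h)
    rcases Nat.lt_or_ge i.1 j.1 with hlt | hge
    · exact ⟨i.1, j.1, hlt, by omega, heq⟩
    · exact ⟨j.1, i.1, by omega, by omega, heq.symm⟩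
  obtain ⟨a, b, hab, hbM, heq⟩ := hpigeon
  set p := b - a with hp
  have hppos : 0 < p := by omega
  have hperiod : f^[p] w = w := by
    have h1 : f^[b] w = f^[a] (f^[p] w) := by
      rw [← Function.iterate_add_apply]
      congr 1
      omega
    rw [h1] at heq
    exact hinjIter a (hmapsIter p hw) hw heq.symm
  have hdvd : p ∣ Nat.factorial M := Nat.dvd_factorial hppos (by omega)
  obtain ⟨c, hc⟩ := hdvd
  have hAll : ∀ c, (f^[p])^[c] w = w := by
    intro c
    induction c with
    | zero => simp
    | succ c ih => rw [Function.iterate_succ_apply, hperiod, ih]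
  rw [hc, Function.iterate_mul]
  exact hAll c

def clSet (a : ℕ → X) : Set X :=
  {c | ∃ φ : ℕ → ℕ, StrictMono φ ∧ Tendsto (a ∘ φ) atTop (𝓝 c)}

lemma clSet_nonempty (a : ℕ → X) : (clSet a).Nonempty := by
  obtain ⟨c, φ, hφ, h⟩ := CompactSpace.tendsto_subseq a
  exact ⟨c, φ, hφ, h⟩

lemma clSet_of_frequently {a : ℕ → X} {P : ℕ → Prop} (h : ∃ᶠ n in atTop, P n) :
    ∃ z ∈ clSet a, ∃ φ : ℕ → ℕ, StrictMono φ ∧ (∀ k, P (φ k)) ∧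
      Tendsto (a ∘ φ) atTop (𝓝 z) := by
  obtain ⟨φ, hφmono, hφ⟩ := extraction_of_frequently_atTop h
  obtain ⟨z, -, ψ, hψmono, hz⟩ := isCompact_univ.tendsto_subseq
    (x := a ∘ φ) (fun k => mem_univ _)
  refine ⟨z, ⟨φ ∘ ψ, hφmono.comp hψmono, hz⟩, φ ∘ ψ, hφmono.comp hψmono,
    fun k => hφ (ψ k), hz⟩

lemma tendsto_of_clSet_singleton {a : ℕ → X} {c : X} (h : clSet a ⊆ {c}) :
    Tendsto a atTop (𝓝 c) := by
  by_contra hcon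
  rw [Metric.tendsto_nhds] at hcon
  push_neg at hcon
  obtain ⟨ε, hε, hfreq⟩ := hcon
  have hfreq' : ∃ᶠ n in atTop, ε ≤ dist (a n) c := by
    exact hfreq
  obtain ⟨z, hz, φ, hφmono, hφP, hφt⟩ := clSet_of_frequently (a := a) hfreq'
  have hzc : z = c := h hz
  have hlim : Tendsto (fun k => dist (a (φ k)) c) atTop (𝓝 (dist z c)) :=
    hφt.dist tendsto_const_nhds
  have hdist : ε ≤ dist z c := ge_of_tendsto' hlim hφP
  rw [hzc, dist_self] at hdist
  linarith

lemma clSet_approach {a : ℕ → X} {ε : ℝ} (hε : 0 < ε) :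
    ∀ᶠ n in atTop, ∃ c ∈ clSet a, dist (a n) c < ε := by
  by_contra h
  rw [not_eventually] at h
  have h' : ∃ᶠ n in atTop, ∀ c ∈ clSet a, ε ≤ dist (a n) c := by
    refine h.mono fun n hn => ?_
    push_neg at hn
    exact hn
  obtain ⟨z, hz, φ, hφmono, hφP, hφt⟩ := clSet_of_frequently (a := a) h'
  have hlim : Tendsto (fun k => dist (a (φ k)) z) atTop (𝓝 (dist z z)) :=
    hφt.dist tendsto_const_nhds
  have hdist : ε ≤ dist z z := ge_of_tendsto' hlim (fun k => hφP k z hz)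
  rw [dist_self] at hdist
  linarith

lemma tendsto_of_finite_clSet {a : ℕ → X} (hC : (clSet a).Finite)
    (hstep : Tendsto (fun n => dist (a (n + 1)) (a n)) atTop (𝓝 0)) :
    ∃ c, Tendsto a atTop (𝓝 c) := by
  obtain ⟨c₀, hc₀⟩ := clSet_nonempty a
  -- it suffices to show the cluster set is a subsingleton
  suffices hsub : ∀ c ∈ clSet a, c = c₀ by
    exact ⟨c₀, tendsto_of_clSet_singleton fun c hc => hsub c hc⟩
  by_contra hcon
  push_neg at hcon
  obtain ⟨c₁, hc₁, hne⟩ := hcon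
  -- minimal pairwise distance δ
  classical
  set D : Finset ℝ := ((hC.toFinset ×ˢ hC.toFinset).filter
    fun p => p.1 ≠ p.2).image fun p => dist p.1 p.2 with hD
  have hmemD : dist c₁ c₀ ∈ D := by
    rw [hD]
    apply Finset.mem_image.mpr
    refine ⟨(c₁, c₀), ?_, rfl⟩
    rw [Finset.mem_filter]
    refine ⟨Finset.mem_product.mpr ⟨?_, ?_⟩, hne⟩ <;>
      simpa [Set.Finite.mem_toFinset] using ‹_›
  have hDne : D.Nonempty := ⟨_, hmemD⟩
  set δ := D.min' hDne with hδ
  have hδpos : 0 < δ := by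
    obtain ⟨p, hp, hpd⟩ := Finset.mem_image.mp (D.min'_mem hDne)
    rw [Finset.mem_filter] at hp
    rw [hδ, ← hpd]
    exact dist_pos.mpr hp.2
  have hδle : ∀ u ∈ clSet a, ∀ v ∈ clSet a, u ≠ v → δ ≤ dist u v := by
    intro u hu v hv huv
    apply D.min'_le
    apply Finset.mem_image.mpr
    refine ⟨(u, v), ?_, rfl⟩
    rw [Finset.mem_filter]
    exact ⟨Finset.mem_product.mpr ⟨(Set.Finite.mem_toFinset hC).mpr hu,
      (Set.Finite.mem_toFinset hC).mpr hv⟩, huv⟩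
  -- find N after which the sequence is trapped near one cluster point
  have hev1 : ∀ᶠ n in atTop, ∃ c ∈ clSet a, dist (a n) c < δ / 4 :=
    clSet_approach (by linarith)
  have hev2 : ∀ᶠ n in atTop, dist (a (n + 1)) (a n) < δ / 4 := by
    have := (Metric.tendsto_nhds.mp hstep) (δ / 4) (by linarith)
    exact this.mono fun n hn => by
      rw [Real.dist_eq] at hn
      have : |dist (a (n+1)) (a n)| = dist (a (n+1)) (a n) := abs_of_nonneg dist_nonneg
      simpa [this] using hn
  obtain ⟨N, hN⟩ := (hev1.and hev2).exists_forall_of_atTop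
  obtain ⟨c, hcC, hcN⟩ := (hN N le_rfl).1
  -- trapped: all later terms stay near c
  have htrap : ∀ n, N ≤ n → dist (a n) c < δ / 4 := by
    intro n hn
    induction n, hn using Nat.le_induction with
    | base => exact hcN
    | succ n hn ih =>
      obtain ⟨⟨c', hc'C, hc'⟩, hstepn⟩ := hN (n + 1) (by omega)
      have hle : dist c c' ≤ dist (a n) c + dist (a (n+1)) (a n) + dist (a (n+1)) c' := by
        have h1 : dist c c' ≤ dist c (a n) + dist (a n) c' := dist_triangle _ _ _
        have h2 : dist (a n) c' ≤ dist (a n) (a (n+1)) + dist (a (n+1)) c' := dist_triangle _ _ _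
        rw [dist_comm c (a n)] at h1
        rw [dist_comm (a n) (a (n+1))] at h2
        linarith
      have hcc' : c = c' := by
        by_contra hne'
        have := hδle c hcC c' hc'C hne'
        have hstep' := (hN n hn).2
        linarith
      rw [hcc']
      exact hc'
  -- c₁ or c₀ differs from c; both are cluster points, contradiction
  have hnear : ∀ z ∈ clSet a, dist z c ≤ δ / 4 := by
    intro z hz
    obtain ⟨φ, hφmono, hφt⟩ := hz
    have hlim : Tendsto (fun k => dist (a (φ k)) c) atTop (𝓝 (dist z c)) :=
      hφt.dist tendsto_const_nhds
    apply le_of_tendsto hlim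
    filter_upwards [eventually_ge_atTop N] with k hk
    exact le_of_lt (htrap (φ k) (le_trans hk hφmono.le_apply))
  have hone : ∀ z ∈ clSet a, ∀ z' ∈ clSet a, z = z' := by
    intro z hz z' hz'
    by_contra hne'
    have h1 := hδle z hz z' hz' hne'
    have h2 := hnear z hz
    have h3 := hnear z' hz'
    have : dist z z' ≤ dist z c + dist z' c := by
      rw [dist_comm z' c]
      exact dist_triangle _ _ _
    linarith
  exact hne (hone c₁ hc₁ c₀ hc₀)

lemma rev_main (hf : Continuous f) [Nonempty X] {M : ℕ}
    (hM : ∀ x : X, (ω[x]).Finite ∧ (ω[x]).ncard ≤ M) :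
    (closure {g : X → X | ∃ n : ℕ, g = f^[n]} \ {g : X → X | ∃ n : ℕ, g = f^[n]}).Finite := by
  classical
  set P := Nat.factorial M with hPdef
  have hP : 0 < P := Nat.factorial_pos M
  -- the cluster set of n ↦ f^[P n] x is inside ω[x]
  have key : ∀ x : X, clSet (fun n => (f^[P])^[n] x) ⊆ ω[x] := by
    intro x c hc
    obtain ⟨φ, hφmono, hφt⟩ := hc
    apply mem_omega_of_tendsto (e := fun k => P * φ k)
    · apply tendsto_atTop_mono (fun k => ?_) tendsto_id
      show id k ≤ P * φ k
      have h1 : k ≤ φ k := hφmono.le_apply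
      have h2 : φ k ≤ P * φ k := Nat.le_mul_of_pos_left _ hP
      simp only [id_eq]
      omega
    · have : ∀ k, f^[P * φ k] x = (f^[P])^[φ k] x := by
        intro k
        rw [Function.iterate_mul]
      simpa [this, Function.comp_def] using hφt
  -- convergence of f^[P n] x
  have hconv : ∀ x : X, ∃ c : X, Tendsto (fun n => (f^[P])^[n] x) atTop (𝓝 c) := by
    intro x
    apply tendsto_of_finite_clSet ((hM x).1.subset (key x))
    -- steps tend to 0
    by_contra hcon
    have hcon' : ∃ ε > (0:ℝ), ∃ᶠ n in atTop,
        ε ≤ dist ((f^[P])^[n+1] x) ((f^[P])^[n] x) := by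
      rw [Metric.tendsto_nhds] at hcon
      push_neg at hcon
      obtain ⟨ε, hε, hfreq⟩ := hcon
      refine ⟨ε, hε, hfreq.mono fun n hn => ?_⟩
      rw [Real.dist_eq, abs_of_nonneg (by simpa using dist_nonneg)] at hn
      simpa using hn
    obtain ⟨ε, hε, hfreq⟩ := hcon'
    obtain ⟨z, hz, φ, hφmono, hφP, hφt⟩ :=
      clSet_of_frequently (a := fun n => (f^[P])^[n] x) hfreq
    have hzfix : f^[P] z = z := omega_periodic hf (hM x).1 (hM x).2 z (key x hz)
    have hlim : Tendsto
        (fun k => dist ((f^[P])^[φ k + 1] x) ((f^[P])^[φ k] x)) atTop (𝓝 0) := by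
      have h1 : Tendsto (fun k => (f^[P])^[φ k] x) atTop (𝓝 z) := hφt
      have h2 : Tendsto (fun k => f^[P] ((f^[P])^[φ k] x)) atTop (𝓝 (f^[P] z)) :=
        ((hf.iterate P).tendsto z).comp h1
      have h3 : Tendsto (fun k => (f^[P])^[φ k + 1] x) atTop (𝓝 z) := by
        rw [← hzfix]
        have : ∀ k, (f^[P])^[φ k + 1] x = f^[P] ((f^[P])^[φ k] x) := fun k =>
          Function.iterate_succ_apply' _ _ _
        simpa [this] using h2
      simpa using h3.dist h1
    have : ε ≤ (0:ℝ) := ge_of_tendsto' hlim fun k => hφP k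
    linarith
  choose Φ hΦ using hconv
  -- key convergence with remainders
  have hclose : ∀ (x : X) (r : ℕ),
      Tendsto (fun q => f^[P * q + r] x) atTop (𝓝 (Φ (f^[r] x))) := by
    intro x r
    have h1 := hΦ (f^[r] x)
    have h2 : ∀ q, (f^[P])^[q] (f^[r] x) = f^[P * q + r] x := by
      intro q
      rw [Function.iterate_add_apply, Function.iterate_mul]
    simpa [h2] using h1
  -- the finite candidate set
  apply Set.Finite.subset (((Set.finite_Iio P).image (fun r => Φ ∘ f^[r])))
  rintro g₀ ⟨hg₀cl, hg₀S⟩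
  by_contra hg₀F
  -- choose witnesses x r with g₀ (x r) ≠ Φ (f^[r] (x r)) for r < P
  have hx0 : ∀ r : ℕ, ∃ xx : X, r < P → g₀ xx ≠ Φ (f^[r] xx) := by
    intro r
    by_cases hr : r < P
    · have hne : g₀ ≠ Φ ∘ f^[r] := by
        intro h
        exact hg₀F ⟨r, hr, h.symm⟩
      obtain ⟨xx, hxx⟩ := Function.ne_iff.mp hne
      exact ⟨xx, fun _ => hxx⟩
    · exact ⟨Classical.arbitrary X, fun h => absurd h hr⟩
  choose x hx using hx0
  -- choose witnesses y m with g₀ (y m) ≠ f^[m] (y m)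
  have hy0 : ∀ m : ℕ, ∃ yy : X, g₀ yy ≠ f^[m] yy := by
    intro m
    apply Function.ne_iff.mp
    intro h
    exact hg₀S ⟨m, h⟩
  choose y hy using hy0
  -- epsilon
  have hmin : ∃ δ : ℝ, 0 < δ ∧ ∀ r, r < P → δ ≤ dist (g₀ (x r)) (Φ (f^[r] (x r))) := by
    have hne : (Finset.image (fun r => dist (g₀ (x r)) (Φ (f^[r] (x r))))
        (Finset.range P)).Nonempty :=
      ⟨_, Finset.mem_image.mpr ⟨0, Finset.mem_range.mpr hP, rfl⟩⟩
    refine ⟨Finset.min' _ hne, ?_, ?_⟩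
    · obtain ⟨r, hr, hrd⟩ := Finset.mem_image.mp (Finset.min'_mem _ hne)
      rw [← hrd]
      exact dist_pos.mpr (hx r (Finset.mem_range.mp hr))
    · intro r hr
      exact Finset.min'_le _ _ (Finset.mem_image.mpr ⟨r, Finset.mem_range.mpr hr, rfl⟩)
  obtain ⟨δ, hδpos, hδle⟩ := hmin
  set ε := δ / 3 with hεdef
  have hεpos : 0 < ε := by rw [hεdef]; linarith
  -- uniform N₀ for all r
  have hN0 : ∀ r : ℕ, ∃ Nr : ℕ, ∀ q, Nr ≤ q →
      dist (f^[P * q + r] (x r)) (Φ (f^[r] (x r))) < ε := by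
    intro r
    have := (Metric.tendsto_nhds.mp (hclose (x r) r)) ε hεpos
    rw [eventually_atTop] at this
    exact this
  choose NN hNN using hN0
  set N₀ := (Finset.range P).sup NN with hN₀
  set N := P * N₀ + P with hNdef
  -- the open neighbourhood U of g₀
  set U : Set (X → X) :=
    {h | (∀ r ∈ Finset.range P, dist (h (x r)) (g₀ (x r)) < ε) ∧
         (∀ m ∈ Finset.range N, dist (h (y m)) (g₀ (y m)) < dist (g₀ (y m)) (f^[m] (y m)))}
    with hU
  have hUopen : IsOpen U := by
    have e1 : IsOpen {h : X → X |
        ∀ r ∈ Finset.range P, dist (h (x r)) (g₀ (x r)) < ε} := by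
      rw [show {h : X → X | ∀ r ∈ Finset.range P, dist (h (x r)) (g₀ (x r)) < ε}
          = ⋂ r ∈ Finset.range P, {h : X → X | dist (h (x r)) (g₀ (x r)) < ε} from by
        ext h; simp]
      apply isOpen_biInter_finset
      intro r _
      exact isOpen_lt ((continuous_apply (x r)).dist continuous_const) continuous_const
    have e2 : IsOpen {h : X → X | ∀ m ∈ Finset.range N,
        dist (h (y m)) (g₀ (y m)) < dist (g₀ (y m)) (f^[m] (y m))} := by
      rw [show {h : X → X | ∀ m ∈ Finset.range N,
          dist (h (y m)) (g₀ (y m)) < dist (g₀ (y m)) (f^[m] (y m))}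
          = ⋂ m ∈ Finset.range N,
            {h : X → X | dist (h (y m)) (g₀ (y m)) < dist (g₀ (y m)) (f^[m] (y m))} from by
        ext h; simp]
      apply isOpen_biInter_finset
      intro m _
      exact isOpen_lt ((continuous_apply (y m)).dist continuous_const) continuous_const
    rw [hU]
    exact e1.inter e2
  have hg₀U : g₀ ∈ U := by
    rw [hU]
    constructor
    · intro r _
      simpa using hεpos
    · intro m _
      simpa using dist_pos.mpr (hy m)
  -- closure: some iterate lies in U
  obtain ⟨h, hhU, n, hhn⟩ := mem_closure_iff.mp hg₀cl U hUopen hg₀U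
  subst hhn
  rcases Nat.lt_or_ge n N with hnN | hnN
  · -- small n: contradiction with the y-condition
    have := hhU.2 n (Finset.mem_range.mpr hnN)
    rw [dist_comm] at this
    exact absurd this (lt_irrefl _)
  · -- large n: contradiction with the x-condition
    set r := n % P with hr
    have hrP : r < P := Nat.mod_lt _ hP
    set q := n / P with hq
    have hnrq : P * q + r = n := Nat.div_add_mod n P
    have hqN₀ : NN r ≤ q := by
      have h1 : NN r ≤ N₀ := Finset.le_sup (Finset.mem_range.mpr hrP)
      have h2 : N₀ + 1 ≤ q := by
        rw [hq]
        rw [Nat.le_div_iff_mul_le hP]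
        calc (N₀ + 1) * P = P * N₀ + P := by ring
          _ ≤ n := hnN
      omega
    have hclose' : dist (f^[n] (x r)) (Φ (f^[r] (x r))) < ε := by
      rw [← hnrq]
      exact hNN r q hqN₀
    have hUx : dist (f^[n] (x r)) (g₀ (x r)) < ε :=
      hhU.1 r (Finset.mem_range.mpr hrP)
    have htri : dist (g₀ (x r)) (Φ (f^[r] (x r))) ≤
        dist (g₀ (x r)) (f^[n] (x r)) + dist (f^[n] (x r)) (Φ (f^[r] (x r))) :=
      dist_triangle _ _ _
    have hge := hδle r hrP
    rw [dist_comm (g₀ (x r)) (f^[n] (x r))] at htri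
    rw [hεdef] at hclose' hUx
    linarith

lemma it_bounded {a b : ℕ} (hab : a < b) (heq : f^[a] = f^[b]) :
    ∀ n : ℕ, ∃ m, m < b ∧ f^[m] = f^[n] := by
  intro n
  induction n using Nat.strong_induction_on with
  | _ n ih =>
    rcases Nat.lt_or_ge n b with h | h
    · exact ⟨n, h, rfl⟩
    · have key : f^[n - b + a] = f^[n] := by
        calc f^[n - b + a] = f^[n - b] ∘ f^[a] := Function.iterate_add f _ _
          _ = f^[n - b] ∘ f^[b] := by rw [heq]
          _ = f^[n - b + b] := (Function.iterate_add f _ _).symm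
          _ = f^[n] := by rw [show n - b + b = n from by omega]
      obtain ⟨m, hm, hm2⟩ := ih (n - b + a) (by omega)
      exact ⟨m, hm, hm2.trans key⟩

lemma caseA_omega (hb : ∀ n : ℕ, ∃ m, m < b ∧ f^[m] = f^[n]) (x : X) :
    (ω[x]).Finite ∧ (ω[x]).ncard ≤ b := by
  have horb_fin : ((fun m => f^[m] x) '' (Iio b)).Finite := (Set.finite_Iio b).image _
  have hsub : ω[x] ⊆ (fun m => f^[m] x) '' (Iio b) := by
    have h1 : ω[x] ⊆ closure (image2 (fun (n : ℕ) (z : X) => f^[n] z) univ {x}) :=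
      omegaLimit_subset_closure_fw_image _ _ _ univ_mem
    have h2 : image2 (fun (n : ℕ) (z : X) => f^[n] z) univ {x}
        = (fun m => f^[m] x) '' (Iio b) := by
      ext z
      constructor
      · rintro ⟨n, -, x', rfl, rfl⟩
        obtain ⟨m, hm, hm2⟩ := hb n
        refine ⟨m, hm, ?_⟩
        show f^[m] _ = f^[n] _
        rw [hm2]
      · rintro ⟨m, hm, rfl⟩
        exact ⟨m, mem_univ _, x, rfl, rfl⟩
    rw [h2] at h1
    rwa [horb_fin.isClosed.closure_eq] at h1
  refine ⟨horb_fin.subset hsub, ?_⟩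
  calc (ω[x]).ncard ≤ ((fun m => f^[m] x) '' (Iio b)).ncard :=
        Set.ncard_le_ncard hsub horb_fin
    _ ≤ (Iio b).ncard := Set.ncard_image_le (Set.finite_Iio b)
    _ = b := by
        rw [show (Iio b : Set ℕ) = ↑(Finset.range b) from by ext; simp]
        rw [Set.ncard_coe_finset, Finset.card_range]

lemma fwd_caseB (hf : Continuous f)
    (hE : (closure {g : X → X | ∃ n : ℕ, g = f^[n]} \ {g : X → X | ∃ n : ℕ, g = f^[n]}).Finite)
    (hinj : Function.Injective fun n : ℕ => f^[n]) (x : X) :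
    (ω[x]).Finite ∧ (ω[x]).ncard ≤
      (closure {g : X → X | ∃ n : ℕ, g = f^[n]} \ {g : X → X | ∃ n : ℕ, g = f^[n]}).ncard := by
  classical
  set S : Set (X → X) := {g : X → X | ∃ n : ℕ, g = f^[n]} with hS
  set T : ℕ → Set (X → X) := fun N => (fun n => f^[n]) '' (Ici N) with hT
  set Einf : Set (X → X) := ⋂ N, closure (T N) with hEinf
  -- (a) ω[x] ⊆ eval_x '' Einf
  have ha : ω[x] ⊆ (fun g => g x) '' Einf := by
    intro y hy
    set A : ℕ → Set (X → X) := fun j =>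
      (fun n => f^[n]) '' {n | j ≤ n ∧ dist (f^[n] x) y ≤ 1 / (j + 1)} with hA
    have hdec : ∀ j, closure (A (j+1)) ⊆ closure (A j) := by
      intro j
      apply closure_mono
      apply image_mono
      intro n hn
      obtain ⟨h1, h2⟩ := hn
      refine ⟨by omega, h2.trans ?_⟩
      apply one_div_le_one_div_of_le
      · positivity
      · push_cast
        linarith
    have hne : ∀ j, (closure (A j)).Nonempty := by
      intro j
      have hfreq := (mem_omega_iff'.mp hy) (1 / (j + 1)) (by positivity)
      rw [frequently_atTop] at hfreq
      obtain ⟨n, hn1, hn2⟩ := hfreq j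
      exact ⟨f^[n], subset_closure ⟨n, ⟨hn1, hn2.le⟩, rfl⟩⟩
    obtain ⟨g, hg⟩ := IsCompact.nonempty_iInter_of_sequence_nonempty_isCompact_isClosed
      (fun j => closure (A j)) hdec hne isClosed_closure.isCompact
      (fun j => isClosed_closure)
    rw [mem_iInter] at hg
    have hgE : g ∈ Einf := by
      rw [hEinf, mem_iInter]
      intro N
      exact closure_mono (image_mono (fun n hn => hn.1)) (hg N)
    refine ⟨g, hgE, ?_⟩
    -- g x = y
    have hdist : ∀ j : ℕ, dist (g x) y ≤ 1 / (j + 1) := by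
      intro j
      have h1 : g x ∈ closure ((fun h : X → X => h x) '' A j) := by
        apply image_closure_subset_closure_image (continuous_apply x)
        exact mem_image_of_mem _ (hg j)
      have h2 : (fun h : X → X => h x) '' A j ⊆ Metric.closedBall y (1 / (j + 1)) := by
        rintro z ⟨h, ⟨n, hn, rfl⟩, rfl⟩
        simpa [Metric.mem_closedBall] using hn.2
      have h3 := closure_minimal h2 Metric.isClosed_closedBall h1
      rwa [Metric.mem_closedBall] at h3
    have : dist (g x) y ≤ 0 :=
      ge_of_tendsto' tendsto_one_div_add_atTop_nhds_zero_nat hdist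
    have := le_antisymm this dist_nonneg
    rwa [dist_eq_zero] at this
  -- (b) Einf contains no iterate
  have hb : ∀ g ∈ Einf, g ∉ S := by
    rintro g₀ hg₀ ⟨m, rfl⟩
    rw [hEinf, mem_iInter] at hg₀
    -- every iterate ≥ m is a limit of strictly later iterates
    have hstep : ∀ k, m ≤ k → f^[k] ∈ closure (T (k + 1)) := by
      intro k hk
      have hR : Continuous (fun h : X → X => h ∘ f^[k - m]) :=
        continuous_pi fun z => continuous_apply (f^[k - m] z)
      have h1 : f^[k] = (fun h : X → X => h ∘ f^[k - m]) f^[m] := by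
        show f^[k] = f^[m] ∘ f^[k - m]
        rw [← Function.iterate_add, show m + (k - m) = k from by omega]
      have h2 : f^[m] ∈ closure (T (m + 1)) := hg₀ (m + 1)
      have h3 : (fun h : X → X => h ∘ f^[k - m]) f^[m] ∈
          closure ((fun h : X → X => h ∘ f^[k - m]) '' T (m + 1)) :=
        image_closure_subset_closure_image hR (mem_image_of_mem _ h2)
      have h4 : (fun h : X → X => h ∘ f^[k - m]) '' T (m + 1) ⊆ T (k + 1) := by
        rintro h ⟨h', ⟨n, hn, rfl⟩, rfl⟩
        refine ⟨n + (k - m), ?_, ?_⟩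
        · simp only [mem_Ici] at hn ⊢
          omega
        · show (fun n => f^[n]) (n + (k - m)) = f^[n] ∘ f^[k - m]
          exact Function.iterate_add f n (k - m)
      rw [h1]
      exact closure_mono h4 h3
    -- the compact countable space K
    set K : Set (X → X) := closure (T m) with hK
    have hScount : S.Countable := by
      have hsub : S ⊆ Set.range fun n : ℕ => f^[n] := by
        rintro g ⟨n, rfl⟩
        exact ⟨n, rfl⟩
      exact Set.Countable.mono hsub (Set.countable_range _)
    have hKsub : K ⊆ S ∪ (closure S \ S) := by
      intro h hh
      by_cases hhS : h ∈ S
      · exact Or.inl hhS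
      · refine Or.inr ⟨?_, hhS⟩
        have hTS : T m ⊆ S := by
          rintro h' ⟨n, -, rfl⟩
          exact ⟨n, rfl⟩
        exact closure_mono hTS hh
    have hKcount : K.Countable := (hScount.union hE.countable).mono hKsub
    have hKcpt : IsCompact K := isClosed_closure.isCompact
    haveI : CompactSpace ↥K := isCompact_iff_compactSpace.mp hKcpt
    haveI : Countable ↥K := hKcount.to_subtype
    haveI : Nonempty ↥K := ⟨⟨f^[m], subset_closure ⟨m, mem_Ici.mpr le_rfl, rfl⟩⟩⟩
    haveI : LocallyCompactSpace ↥K := inferInstance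
    haveI : BaireSpace ↥K := BaireSpace.of_t2Space_locallyCompactSpace
    -- Baire category on K
    obtain ⟨i, hint⟩ := nonempty_interior_of_iUnion_of_closed
      (f := fun i : ↥K => ({i} : Set ↥K)) (fun i => isClosed_singleton)
      (iUnion_of_singleton ↥K)
    have hiopen : IsOpen ({i} : Set ↥K) := by
      obtain ⟨j, hj⟩ := hint
      replace hj : j ∈ interior ({i} : Set ↥K) := hj
      have hji : j ∈ ({i} : Set ↥K) := interior_subset hj
      rw [mem_singleton_iff] at hji
      subst hji
      have heq2 : interior ({j} : Set ↥K) = {j} :=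
        Subset.antisymm interior_subset (singleton_subset_iff.mpr hj)
      rw [← heq2]
      exact isOpen_interior
    obtain ⟨U, hUopen, hUpre⟩ := isOpen_induced_iff.mp hiopen
    have hUK : U ∩ K = {i.val} := by
      apply Subset.antisymm
      · rintro h ⟨hhU, hhK⟩
        have : (⟨h, hhK⟩ : ↥K) ∈ Subtype.val ⁻¹' U := hhU
        rw [hUpre, mem_singleton_iff] at this
        rw [mem_singleton_iff]
        exact congrArg Subtype.val this
      · rintro h rfl
        refine ⟨?_, i.2⟩
        have : i ∈ Subtype.val ⁻¹' U := by rw [hUpre]; exact rfl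
        exact this
    have hiU : i.val ∈ U := by
      have : i ∈ Subtype.val ⁻¹' U := by rw [hUpre]; exact rfl
      exact this
    -- i.val is an iterate f^[n] with n ≥ m
    obtain ⟨h1, hh1U, n, hn, hh1⟩ := mem_closure_iff.mp i.2 U hUopen hiU
    have hh1K : h1 ∈ K := subset_closure ⟨n, hn, hh1⟩
    have hival : i.val = f^[n] := by
      have : h1 ∈ ({i.val} : Set (X → X)) := by rw [← hUK]; exact ⟨hh1U, hh1K⟩
      rw [mem_singleton_iff] at this
      rw [← this, ← hh1]
    -- but i.val is also a limit of strictly later iterates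
    have hcl : i.val ∈ closure (T (n + 1)) := by
      rw [hival]
      exact hstep n hn
    obtain ⟨h2, hh2U, n', hn', hh2⟩ := mem_closure_iff.mp hcl U hUopen hiU
    have hh2K : h2 ∈ K := by
      apply subset_closure
      refine ⟨n', ?_, hh2⟩
      have hnm : m ≤ n := hn
      simp only [mem_Ici] at hn' ⊢
      omega
    have : h2 ∈ ({i.val} : Set (X → X)) := by rw [← hUK]; exact ⟨hh2U, hh2K⟩
    rw [mem_singleton_iff] at this
    rw [hival] at this
    rw [← hh2] at this
    have := hinj this
    simp only [mem_Ici] at hn'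
    omega
  -- (c) conclude
  have hsub2 : Einf ⊆ closure S \ S := by
    intro g hg
    refine ⟨?_, hb g hg⟩
    have h1 : g ∈ closure (T 0) := by
      rw [hEinf, mem_iInter] at hg
      exact hg 0
    have hTS : T 0 ⊆ S := by
      rintro h' ⟨n, -, rfl⟩
      exact ⟨n, rfl⟩
    exact closure_mono hTS h1
  have hEinf_fin : Einf.Finite := hE.subset hsub2
  constructor
  · exact (hEinf_fin.image _).subset ha
  · calc (ω[x]).ncard ≤ ((fun g => g x) '' Einf).ncard :=
        Set.ncard_le_ncard ha (hEinf_fin.image _)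
    _ ≤ Einf.ncard := Set.ncard_image_le hEinf_fin
    _ ≤ (closure S \ S).ncard := Set.ncard_le_ncard hsub2 hE

end ellisAux

/-- Theorem 2.3: For a dynamical system `(X, f)` on a compact metric space,
`E(X,f)* = E(X,f) \ {fⁿ : n ∈ ℕ}` is finite if and only if there is an `M`
bounding the cardinalities of all ω-limit sets. -/
theorem ellis_star_finite_iff {X : Type*} [MetricSpace X] [CompactSpace X]
    (f : X → X) (hf : Continuous f) :
    (closure {g : X → X | ∃ n : ℕ, g = f^[n]} \ {g : X → X | ∃ n : ℕ, g = f^[n]}).Finite ↔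
      ∃ M : ℕ, ∀ x : X,
        (omegaLimit Filter.atTop (fun n : ℕ => f^[n]) {x}).Finite ∧
        (omegaLimit Filter.atTop (fun n : ℕ => f^[n]) {x}).ncard ≤ M := by
  constructor
  · intro hE
    by_cases hinj : Function.Injective fun n : ℕ => f^[n]
    · exact ⟨_, fun x => fwd_caseB hf hE hinj x⟩
    · rw [Function.not_injective_iff] at hinj
      obtain ⟨a, b, heq, hne⟩ := hinj
      rcases Nat.lt_or_ge a b with h | h
      · exact ⟨b, fun x => caseA_omega (it_bounded h heq) x⟩
      · have h' : b < a := by omega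
        exact ⟨a, fun x => caseA_omega (it_bounded h' heq.symm) x⟩
  · rintro ⟨M, hM⟩
    by_cases hX : Nonempty X
    · exact rev_main hf hM
    · rw [not_nonempty_iff] at hX
      have hempty : closure {g : X → X | ∃ n : ℕ, g = f^[n]}
          \ {g : X → X | ∃ n : ℕ, g = f^[n]} = ∅ := by
        apply Set.diff_eq_empty.mpr
        intro g _
        exact ⟨0, funext fun x => (hX.false x).elim⟩
      rw [hempty]
      exact Set.finite_empty
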